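/- Let W_α be the unilateral weighted shift with weights α_i = 2 + (−1)^i. Then the mean transform of W_α is 2U₊, twice the unweighted unilateral shift, the spectral radius of W_α is √3, while ℓ(W_α) = 2; hence ℓ(W_α) ≠ r(W_α) and σ(W_α) = {λ : |λ| ≤ √3} ≠ σ(Ŵ_α) = {λ : |λ| ≤ 2}. -/

import Mathlib

open Filter Topology
open scoped ENNReal

noncomputable def altWt (i : ℕ) : ℝ := 2 + (-1 : ℝ) ^ i

namespace ShiftAux

abbrev H : Type := lp (fun _ : ℕ => ℂ) 2

/-- `T` is the weighted shift by `m` with weights `w`. -/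
def IsShiftM (T : H →L[ℂ] H) (m : ℕ) (w : ℕ → ℝ) : Prop :=
  ∀ i : ℕ, T (lp.single 2 i 1) = (w i : ℂ) • lp.single 2 (i + m) 1

lemma continuous_eval (j : ℕ) : Continuous (fun f : H => f j) :=
  (continuous_apply j).comp (lp.uniformContinuous_coe (p := 2)).continuous

lemma hasSum_eval {g : ℕ → H} {f : H} (h : HasSum g f) (j : ℕ) :
    HasSum (fun i => g i j) (f j) := by
  have h2 := ((continuous_eval j).tendsto f).comp h
  refine Tendsto.congr (fun s => ?_) h2
  simp [Function.comp, lp.coeFn_sum, Finset.sum_apply]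
  exact Finset.sum_apply _ _ _

lemma single_eq_smul (i : ℕ) (c : ℂ) :
    lp.single 2 i c = c • (lp.single 2 i 1 : H) := by
  rw [← lp.single_smul]
  norm_num

variable {T S : H →L[ℂ] H} {m : ℕ} {w : ℕ → ℝ}

lemma hasSum_shift (hT : IsShiftM T m w) (f : H) :
    HasSum (fun i => ((f i * w i : ℂ)) • (lp.single 2 (i + m) 1 : H)) (T f) := by
  have h := (lp.hasSum_single (by norm_num) f).mapL T
  refine HasSum.congr_fun h fun i => ?_
  rw [single_eq_smul i (f i), map_smul, hT i, smul_smul]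

lemma shift_apply_low (hT : IsShiftM T m w) (f : H) {j : ℕ} (hj : j < m) :
    (T f) j = 0 := by
  have h := hasSum_eval (hasSum_shift hT f) j
  have e : (fun i : ℕ => ((f i * w i : ℂ) • (lp.single 2 (i + m) 1 : H)) j)
      = fun _ => (0 : ℂ) := by
    funext i
    have h1 : (lp.single 2 (i + m) (1 : ℂ) : H) j = 0 :=
      lp.single_apply_ne 2 (i + m) 1 (by omega)
    rw [lp.coeFn_smul, Pi.smul_apply, h1, smul_zero]
  rw [e] at h
  exact h.unique hasSum_zero

lemma shift_apply_add (hT : IsShiftM T m w) (f : H) (j : ℕ) :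
    (T f) (j + m) = (w j : ℂ) * f j := by
  have h := hasSum_eval (hasSum_shift hT f) (j + m)
  have e : (fun i : ℕ => ((f i * w i : ℂ) • (lp.single 2 (i + m) 1 : H)) (j + m))
      = fun i => if i = j then f j * (w j : ℂ) else 0 := by
    funext i
    by_cases hij : i = j
    · subst hij
      simp [lp.coeFn_smul, lp.single_apply_self, smul_eq_mul]
    · have h1 : (lp.single 2 (i + m) (1 : ℂ) : H) (j + m) = 0 :=
        lp.single_apply_ne 2 (i + m) 1 (by omega)
      simp [hij, lp.coeFn_smul, h1]
  rw [e] at h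
  have := h.unique (hasSum_ite_eq j (f j * (w j : ℂ)))
  rw [this, mul_comm]

lemma shift_ext (hT : IsShiftM T m w) (hS : IsShiftM S m w) : T = S :=
  ContinuousLinearMap.ext fun f => (hasSum_shift hT f).unique (hasSum_shift hS f)

lemma rpow_two (x : ℝ) : x ^ (2 : ℝ) = x ^ 2 := by
  rw [show (2 : ℝ) = ((2 : ℕ) : ℝ) by norm_num, Real.rpow_natCast]

lemma norm_sq_eq (f : H) : ‖f‖ ^ 2 = ∑' i, ‖f i‖ ^ 2 := by
  have := lp.norm_rpow_eq_tsum (p := 2) (by norm_num) f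
  simpa [rpow_two] using this

lemma summable_sq (f : H) : Summable fun i : ℕ => ‖f i‖ ^ 2 := by
  have := (lp.memℓp f).summable (p := 2) (by norm_num)
  simpa [rpow_two] using this

lemma shift_norm_sq (hT : IsShiftM T m w) (f : H) :
    ‖T f‖ ^ 2 = ∑' i, (w i) ^ 2 * ‖f i‖ ^ 2 := by
  rw [norm_sq_eq (T f)]
  have hinj : Function.Injective (fun i : ℕ => i + m) := add_left_injective m
  have hsupp : Function.support (fun j => ‖(T f) j‖ ^ 2) ⊆
      Set.range (fun i : ℕ => i + m) := by
    intro j hj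
    by_contra hc
    have hjm : j < m := by
      rcases lt_or_ge j m with h | h
      · exact h
      · exact absurd ⟨j - m, by simpa using Nat.sub_add_cancel h⟩ hc
    exact hj (by simp [shift_apply_low hT f hjm])
  rw [← hinj.tsum_eq hsupp]
  congr 1
  funext j
  rw [shift_apply_add hT f j, norm_mul, mul_pow, Complex.norm_real,
    Real.norm_eq_abs, sq_abs]

lemma shift_opNorm_le (hT : IsShiftM T m w) {C : ℝ} (hC : 0 ≤ C) (hw : ∀ i, |w i| ≤ C) :
    ‖T‖ ≤ C := by
  have hsq : ∀ i (f : H), (w i) ^ 2 * ‖f i‖ ^ 2 ≤ C ^ 2 * ‖f i‖ ^ 2 := by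
    intro i f
    have h1 : (w i) ^ 2 ≤ C ^ 2 := by
      have := hw i
      nlinarith [abs_nonneg (w i), le_abs_self (w i), neg_abs_le (w i)]
    nlinarith [sq_nonneg (‖f i‖)]
  refine ContinuousLinearMap.opNorm_le_bound _ hC fun f => ?_
  have h1 : ‖T f‖ ^ 2 ≤ (C * ‖f‖) ^ 2 := by
    rw [shift_norm_sq hT f, mul_pow, norm_sq_eq f, ← tsum_mul_left]
    refine Summable.tsum_le_tsum (fun i => hsq i f) ?_ ((summable_sq f).mul_left (C ^ 2))
    exact Summable.of_nonneg_of_le (fun i => by positivity) (fun i => hsq i f)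
      ((summable_sq f).mul_left (C ^ 2))
  have h2 : 0 ≤ C * ‖f‖ := by positivity
  nlinarith [norm_nonneg (T f)]

lemma norm_single_one (i : ℕ) : ‖(lp.single 2 i 1 : H)‖ = 1 := by
  have := lp.norm_single (p := 2) (E := fun _ : ℕ => ℂ) (by norm_num)
    i (1 : ℂ)
  simpa using this

lemma shift_le_opNorm (hT : IsShiftM T m w) : |w 0| ≤ ‖T‖ := by
  have h := T.le_opNorm (lp.single 2 0 1)
  rw [hT 0, norm_single_one, mul_one, norm_smul, norm_single_one, mul_one,
    Complex.norm_real, Real.norm_eq_abs] at h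
  exact h

lemma isShiftM_pow (hT : IsShiftM T 1 w) (n : ℕ) :
    IsShiftM (T ^ n) n fun k => ∏ j ∈ Finset.range n, w (k + j) := by
  induction n with
  | zero => intro k; simp
  | succ n ih =>
    intro k
    rw [pow_succ', ContinuousLinearMap.mul_apply, ih k, map_smul, hT (k + n), smul_smul]
    simp only [Finset.prod_range_succ]
    push_cast
    rfl

end ShiftAux

section AltFacts

open ShiftAux

lemma one_le_prod_real {n : ℕ} {f : ℕ → ℝ} (hf : ∀ i, 1 ≤ f i) :
    1 ≤ ∏ j ∈ Finset.range n, f j := by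
  calc (1 : ℝ) = ∏ _j ∈ Finset.range n, 1 := by simp
  _ ≤ ∏ j ∈ Finset.range n, f j :=
    Finset.prod_le_prod (fun i _ => by norm_num) (fun i _ => hf i)

lemma altWt_ge_one (i : ℕ) : 1 ≤ altWt i := by
  rcases Nat.even_or_odd i with h | h <;> simp [altWt, h.neg_one_pow] <;> norm_num

lemma altWt_le_three (i : ℕ) : altWt i ≤ 3 := by
  rcases Nat.even_or_odd i with h | h <;> simp [altWt, h.neg_one_pow] <;> norm_num

lemma altWt_abs_le_three (i : ℕ) : |altWt i| ≤ 3 := by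
  rw [abs_of_pos (lt_of_lt_of_le one_pos (altWt_ge_one i))]
  exact altWt_le_three i

lemma altWt_even (m : ℕ) : altWt (2 * m) = 3 := by
  have h : Even (2 * m) := even_two_mul m
  simp [altWt, h.neg_one_pow] <;> norm_num

lemma altWt_mul_succ (k : ℕ) : altWt k * altWt (k + 1) = 3 := by
  have hs : (-1 : ℝ) ^ k * (-1 : ℝ) ^ k = 1 := by
    rw [← pow_add, ← two_mul, pow_mul]; norm_num
  simp only [altWt, pow_succ]
  nlinarith [hs]

lemma altWt_add_succ (k : ℕ) : altWt k + altWt (k + 1) = 4 := by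
  simp only [altWt, pow_succ]
  ring

lemma prod_alt_even (m k : ℕ) :
    ∏ j ∈ Finset.range (2 * m), altWt (k + j) = 3 ^ m := by
  induction m with
  | zero => simp
  | succ m ih =>
    have h1 : 2 * (m + 1) = 2 * m + 1 + 1 := by omega
    rw [h1, Finset.prod_range_succ, Finset.prod_range_succ, ih, mul_assoc]
    have h2 : k + (2 * m + 1) = k + 2 * m + 1 := by omega
    rw [h2, altWt_mul_succ (k + 2 * m), pow_succ]

lemma prod_alt_odd (m k : ℕ) :
    ∏ j ∈ Finset.range (2 * m + 1), altWt (k + j) = 3 ^ m * altWt (k + 2 * m) := by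
  rw [Finset.prod_range_succ, prod_alt_even m k]

lemma prod_alt_le (n k : ℕ) :
    ∏ j ∈ Finset.range n, altWt (k + j) ≤ 3 ^ ((n + 1) / 2) := by
  rcases Nat.even_or_odd n with ⟨m, hm⟩ | ⟨m, hm⟩
  · have hn : n = 2 * m := by omega
    subst hn
    rw [prod_alt_even m k]
    have h3 : (2 * m + 1) / 2 = m := by omega
    rw [h3]
  · subst hm
    rw [prod_alt_odd m k]
    have h3 : (2 * m + 1 + 1) / 2 = m + 1 := by omega
    rw [h3, pow_succ]
    have := altWt_le_three (k + 2 * m)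
    nlinarith [pow_pos (show (0:ℝ) < 3 by norm_num) m]

lemma prod_alt_zero (n : ℕ) :
    ∏ j ∈ Finset.range n, altWt (0 + j) = 3 ^ ((n + 1) / 2) := by
  rcases Nat.even_or_odd n with ⟨m, hm⟩ | ⟨m, hm⟩
  · have hn : n = 2 * m := by omega
    subst hn
    rw [prod_alt_even m 0]
    congr 1
    omega
  · subst hm
    rw [prod_alt_odd m 0]
    have h1 : (0 : ℕ) + 2 * m = 2 * m := by omega
    rw [h1, altWt_even m]
    have h3 : (2 * m + 1 + 1) / 2 = m + 1 := by omega
    rw [h3, pow_succ]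

end AltFacts

section Spectrum

open ShiftAux

instance : Nontrivial H := by
  refine ⟨⟨lp.single 2 0 1, 0, fun h => ?_⟩⟩
  have h2 := norm_single_one 0
  rw [h, norm_zero] at h2
  norm_num at h2

lemma mem_spectrum_of_freq {T : H →L[ℂ] H} {w : ℕ → ℝ}
    (hT : IsShiftM T 1 w) (hw1 : ∀ i, 1 ≤ w i) {z : ℂ}
    (hfreq : ∃ᶠ n in atTop, ‖z‖ ^ n ≤ ∏ i ∈ Finset.range n, w i) :
    z ∈ spectrum ℂ T := by
  by_contra hmem
  rw [spectrum.notMem_iff] at hmem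
  obtain ⟨u, hu⟩ := hmem
  set x : H := lp.single 2 0 1 with hx
  set y : H := (↑u⁻¹ : H →L[ℂ] H) x with hy
  have hy1 : (algebraMap ℂ (H →L[ℂ] H) z - T) y = x := by
    have h2 := congrArg (fun v : H →L[ℂ] H => v x) u.mul_inv
    simp only [ContinuousLinearMap.mul_apply, ContinuousLinearMap.one_apply] at h2
    rw [hu] at h2
    exact h2
  have key : ∀ j : ℕ, ((algebraMap ℂ (H →L[ℂ] H) z - T) y) j = z * y j - (T y) j := by
    intro j
    have hrw : ((algebraMap ℂ (H →L[ℂ] H) z - T) y) = z • y - T y := by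
      rw [ContinuousLinearMap.sub_apply, Algebra.algebraMap_eq_smul_one,
        ContinuousLinearMap.smul_apply, ContinuousLinearMap.one_apply]
    rw [hrw, lp.coeFn_sub, Pi.sub_apply, lp.coeFn_smul, Pi.smul_apply, smul_eq_mul]
  have hy0 : z * y 0 = 1 := by
    have h0 := congrArg (fun v : H => v 0) hy1
    simp only at h0
    rw [key 0, shift_apply_low hT y (by omega), sub_zero] at h0
    rw [h0]
    try exact lp.single_apply_self 2 0 1
  have hz : z ≠ 0 := by
    intro h
    rw [h, zero_mul] at hy0
    exact zero_ne_one hy0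
  have hysucc : ∀ j : ℕ, z * y (j + 1) = (w j : ℂ) * y j := by
    intro j
    have h0 := congrArg (fun v : H => v (j + 1)) hy1
    simp only at h0
    rw [key (j + 1), shift_apply_add hT y j] at h0
    have hx0 : (x : H) (j + 1) = 0 := lp.single_apply_ne 2 0 1 (Nat.succ_ne_zero j)
    rw [hx0] at h0
    linear_combination h0
  have hval : ∀ j : ℕ, y j = ((∏ i ∈ Finset.range j, w i : ℝ) : ℂ) / z ^ (j + 1) := by
    intro j
    induction j with
    | zero =>
      rw [eq_div_iff (pow_ne_zero 1 hz)]
      simp only [Finset.range_zero, Finset.prod_empty, Complex.ofReal_one, pow_one]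
      linear_combination hy0
    | succ j ih =>
      have hyj : y (j + 1) = (w j : ℂ) * y j / z := by
        rw [eq_div_iff hz]
        linear_combination hysucc j
      rw [hyj, ih, Finset.prod_range_succ]
      push_cast
      field_simp
      ring
  have hnorm : ∀ j : ℕ, ‖y j‖ = (∏ i ∈ Finset.range j, w i) / ‖z‖ ^ (j + 1) := by
    intro j
    rw [hval j, norm_div, norm_pow, Complex.norm_real, Real.norm_eq_abs,
      abs_of_pos (lt_of_lt_of_le one_pos (one_le_prod_real hw1))]
  have hzpos : 0 < ‖z‖ := norm_pos_iff.mpr hz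
  have hsum := summable_sq y
  have ht0 : Tendsto (fun j => ‖y j‖) atTop (𝓝 0) := by
    have h1 := hsum.tendsto_atTop_zero
    have h2 := (Real.continuous_sqrt.tendsto 0).comp h1
    simp only [Real.sqrt_zero] at h2
    refine h2.congr fun j => ?_
    simp [Function.comp, Real.sqrt_sq (norm_nonneg (y j))]
  have hev : ∀ᶠ j in atTop, ‖y j‖ < 1 / ‖z‖ :=
    ht0.eventually (gt_mem_nhds (by positivity))
  have hfr : ∃ᶠ j in atTop, 1 / ‖z‖ ≤ ‖y j‖ := by
    refine hfreq.mono fun n hn => ?_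
    rw [hnorm n, le_div_iff₀ (pow_pos hzpos (n + 1))]
    calc 1 / ‖z‖ * ‖z‖ ^ (n + 1) = ‖z‖ ^ n := by
          rw [pow_succ]
          field_simp
    _ ≤ ∏ i ∈ Finset.range n, w i := hn
  obtain ⟨j, hj1, hj2⟩ := (hfr.and_eventually hev).exists
  linarith

end Spectrum

section Main

open ShiftAux

theorem mean_limit_ne_spectral_radius_example
    (W U What : lp (fun _ : ℕ => ℂ) 2 →L[ℂ] lp (fun _ : ℕ => ℂ) 2)
    (hW : ∀ i : ℕ, W (lp.single 2 i 1) = (altWt i : ℂ) • lp.single 2 (i + 1) 1)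
    (hU : ∀ i : ℕ, U (lp.single 2 i 1) = lp.single 2 (i + 1) 1)
    (hWhat : ∀ i : ℕ, What (lp.single 2 i 1) =
      (((altWt i + altWt (i + 1)) / 2 : ℝ) : ℂ) • lp.single 2 (i + 1) 1) :
    What = (2 : ℂ) • U ∧
    (spectralRadius ℂ W).toReal = Real.sqrt 3 ∧
    spectrum ℂ W = Metric.closedBall (0 : ℂ) (Real.sqrt 3) ∧
    spectrum ℂ What = Metric.closedBall (0 : ℂ) 2 ∧
    Tendsto
      (fun n : ℕ => ⨆ i : ℕ,
        ((2 : ℝ) ^ n)⁻¹ * ∑ j ∈ Finset.range (n + 1), (n.choose j : ℝ) * altWt (i + j))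
      atTop (nhds 2) ∧
    (2 : ℝ) ≠ Real.sqrt 3 := by
  have hWs : IsShiftM W 1 altWt := hW
  have hWhat' : IsShiftM What 1 (fun _ => 2) := by
    intro i
    rw [hWhat i]
    norm_num [altWt_add_succ i]
  have h2U : IsShiftM ((2 : ℂ) • U) 1 (fun _ => 2) := by
    intro i
    rw [ContinuousLinearMap.smul_apply, hU i]
    norm_num
  have sqrt3pos : 0 < Real.sqrt 3 := Real.sqrt_pos.mpr (by norm_num)
  -- norm of W ^ n
  have hnormWn : ∀ n : ℕ, ‖W ^ n‖ = 3 ^ ((n + 1) / 2) := by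
    intro n
    have hpow := isShiftM_pow hWs n
    refine le_antisymm ?_ ?_
    · refine shift_opNorm_le hpow (by positivity) fun k => ?_
      rw [abs_of_pos (lt_of_lt_of_le one_pos (one_le_prod_real fun j => altWt_ge_one (k + j)))]
      exact prod_alt_le n k
    · have h := shift_le_opNorm hpow
      rwa [abs_of_pos (lt_of_lt_of_le one_pos (one_le_prod_real fun j => altWt_ge_one (0 + j))),
        prod_alt_zero n] at h
  -- spectral radius
  have hcn : ∀ n : ℕ, 1 ≤ n → (n : ℝ) ≤ 2 * (((n + 1) / 2 : ℕ) : ℝ) ∧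
      2 * (((n + 1) / 2 : ℕ) : ℝ) ≤ (n : ℝ) + 1 := by
    intro n hn
    constructor <;> exact_mod_cast (by omega : _)
  have ha : Tendsto (fun n : ℕ => (((n + 1) / 2 : ℕ) : ℝ) * (1 / (n : ℝ)))
      atTop (𝓝 (1 / 2)) := by
    have hupper : Tendsto (fun n : ℕ => 1 / 2 + 1 / 2 * (1 / (n : ℝ))) atTop (𝓝 (1 / 2)) := by
      have h0 : Tendsto (fun n : ℕ => 1 / (n : ℝ)) atTop (𝓝 0) :=
        tendsto_one_div_atTop_nhds_zero_nat
      have h1 := (tendsto_const_nhds (x := (1 / 2 : ℝ))).add (h0.const_mul (1 / 2 : ℝ))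
      simpa using h1
    refine tendsto_of_tendsto_of_tendsto_of_le_of_le' tendsto_const_nhds hupper ?_ ?_
    · filter_upwards [eventually_ge_atTop 1] with n hn
      obtain ⟨hc1, hc2⟩ := hcn n hn
      have hn0 : (0 : ℝ) < n := by exact_mod_cast hn
      rw [mul_one_div, le_div_iff₀ hn0]
      linarith
    · filter_upwards [eventually_ge_atTop 1] with n hn
      obtain ⟨hc1, hc2⟩ := hcn n hn
      have hn0 : (0 : ℝ) < n := by exact_mod_cast hn
      rw [mul_one_div, div_le_iff₀ hn0]
      have he : (1 / 2 + 1 / 2 * (1 / (n : ℝ))) * n = ((n : ℝ) + 1) / 2 := by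
        field_simp
      rw [he]
      linarith
  have hcont3 : Continuous (fun x : ℝ => (3 : ℝ) ^ x) := by
    have he : (fun x : ℝ => (3 : ℝ) ^ x) = fun x => Real.exp (Real.log 3 * x) :=
      funext fun x => Real.rpow_def_of_pos (by norm_num) x
    rw [he]
    exact Real.continuous_exp.comp (continuous_const.mul continuous_id)
  have hta : Tendsto (fun n : ℕ => (3 : ℝ) ^ ((((n + 1) / 2 : ℕ) : ℝ) * (1 / (n : ℝ))))
      atTop (𝓝 (Real.sqrt 3)) := by
    have h2 := (hcont3.tendsto (1 / 2)).comp ha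
    rw [show (3 : ℝ) ^ ((1 : ℝ) / 2) = Real.sqrt 3 from (Real.sqrt_eq_rpow 3).symm] at h2
    exact h2
  have hofR : Tendsto (fun n : ℕ =>
      ENNReal.ofReal ((3 : ℝ) ^ ((((n + 1) / 2 : ℕ) : ℝ) * (1 / (n : ℝ)))))
      atTop (𝓝 (ENNReal.ofReal (Real.sqrt 3))) :=
    (ENNReal.continuous_ofReal.tendsto _).comp hta
  have heq : ∀ᶠ n : ℕ in atTop,
      ENNReal.ofReal ((3 : ℝ) ^ ((((n + 1) / 2 : ℕ) : ℝ) * (1 / (n : ℝ))))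
        = (↑‖W ^ n‖₊ : ℝ≥0∞) ^ (1 / (n : ℝ)) := by
    filter_upwards [eventually_ge_atTop 1] with n hn
    rw [← enorm_eq_nnnorm, ← ofReal_norm, hnormWn n,
      ENNReal.ofReal_rpow_of_pos (by positivity)]
    congr 1
    rw [← Real.rpow_natCast (3 : ℝ) ((n + 1) / 2), ← Real.rpow_mul (by norm_num)]
  have hsWn : Tendsto (fun n : ℕ => (↑‖W ^ n‖₊ : ℝ≥0∞) ^ (1 / (n : ℝ)))
      atTop (𝓝 (ENNReal.ofReal (Real.sqrt 3))) :=
    hofR.congr' heq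
  have hsr : spectralRadius ℂ W = ENNReal.ofReal (Real.sqrt 3) :=
    tendsto_nhds_unique (spectrum.pow_nnnorm_pow_one_div_tendsto_nhds_spectralRadius W) hsWn
  -- spectrum of W
  have hspecW : spectrum ℂ W = Metric.closedBall (0 : ℂ) (Real.sqrt 3) := by
    apply Set.Subset.antisymm
    · intro z hz
      have h1 : (‖z‖₊ : ℝ≥0∞) ≤ spectralRadius ℂ W := le_iSup₂ (α := ℝ≥0∞) z hz
      rw [hsr, ← enorm_eq_nnnorm, ← ofReal_norm] at h1
      have h2 : ‖z‖ ≤ Real.sqrt 3 :=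
        (ENNReal.ofReal_le_ofReal_iff (Real.sqrt_nonneg 3)).mp h1
      rwa [Metric.mem_closedBall, dist_zero_right]
    · have hball : Metric.ball (0 : ℂ) (Real.sqrt 3) ⊆ spectrum ℂ W := by
        intro z hz
        rw [Metric.mem_ball, dist_zero_right] at hz
        refine mem_spectrum_of_freq hWs altWt_ge_one ?_
        rw [frequently_atTop]
        intro N
        refine ⟨2 * N, by omega, ?_⟩
        have hprod : ∏ i ∈ Finset.range (2 * N), altWt i = 3 ^ N := by
          simpa using prod_alt_even N 0
        rw [hprod, pow_mul]
        refine pow_le_pow_left₀ (sq_nonneg _) ?_ N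
        have := (Real.lt_sqrt (norm_nonneg z)).mp hz
        linarith
      rw [← closure_ball (0 : ℂ) (ne_of_gt sqrt3pos)]
      exact ((spectrum.isClosed W).closure_subset_iff).mpr hball
  -- spectrum of What
  have hspecWhat : spectrum ℂ What = Metric.closedBall (0 : ℂ) 2 := by
    apply Set.Subset.antisymm
    · have hn2 : ‖What‖ ≤ 2 := shift_opNorm_le hWhat' (by norm_num) (fun i => by norm_num)
      exact (spectrum.subset_closedBall_norm What).trans
        (Metric.closedBall_subset_closedBall hn2)
    · have hball : Metric.ball (0 : ℂ) 2 ⊆ spectrum ℂ What := by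
        intro z hz
        rw [Metric.mem_ball, dist_zero_right] at hz
        refine mem_spectrum_of_freq hWhat' (fun i => by norm_num) ?_
        refine Frequently.of_forall fun n => ?_
        rw [Finset.prod_const, Finset.card_range]
        exact pow_le_pow_left₀ (norm_nonneg z) (le_of_lt hz) n
      rw [← closure_ball (0 : ℂ) (by norm_num : (2 : ℝ) ≠ 0)]
      exact ((spectrum.isClosed What).closure_subset_iff).mpr hball
  -- binomial limit
  have hstep : ∀ n : ℕ, 1 ≤ n → ∀ i : ℕ,
      ∑ j ∈ Finset.range (n + 1), (n.choose j : ℝ) * altWt (i + j) = 2 ^ (n + 1) := by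
    intro n hn i
    have e1 : ∀ j, (n.choose j : ℝ) * altWt (i + j)
        = 2 * (n.choose j : ℝ) + (-1 : ℝ) ^ i * ((-1 : ℝ) ^ j * (n.choose j : ℝ)) := by
      intro j
      simp only [altWt, pow_add]
      ring
    rw [Finset.sum_congr rfl fun j _ => e1 j, Finset.sum_add_distrib,
      ← Finset.mul_sum, ← Finset.mul_sum]
    have e2 : ∑ j ∈ Finset.range (n + 1), ((n.choose j : ℝ)) = 2 ^ n := by
      exact_mod_cast congrArg (Nat.cast (R := ℝ)) (Nat.sum_range_choose n)
    have e3 : ∑ j ∈ Finset.range (n + 1), ((-1 : ℝ) ^ j * (n.choose j : ℝ)) = 0 := by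
      have h := Int.alternating_sum_range_choose (n := n)
      rw [if_neg (by omega)] at h
      exact_mod_cast congrArg (Int.cast (R := ℝ)) h
    rw [e2, e3]
    ring
  have htend : Tendsto
      (fun n : ℕ => ⨆ i : ℕ,
        ((2 : ℝ) ^ n)⁻¹ * ∑ j ∈ Finset.range (n + 1), (n.choose j : ℝ) * altWt (i + j))
      atTop (nhds 2) := by
    have hev : ∀ᶠ n : ℕ in atTop,
        (2 : ℝ) = ⨆ i : ℕ,
          ((2 : ℝ) ^ n)⁻¹ * ∑ j ∈ Finset.range (n + 1), (n.choose j : ℝ) * altWt (i + j) := by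
      filter_upwards [eventually_ge_atTop 1] with n hn
      have hco : ∀ i : ℕ, ((2 : ℝ) ^ n)⁻¹
          * ∑ j ∈ Finset.range (n + 1), (n.choose j : ℝ) * altWt (i + j) = 2 := by
        intro i
        rw [hstep n hn i, pow_succ]
        have h2n : (2 : ℝ) ^ n ≠ 0 := by positivity
        field_simp
      simp only [hco]
      exact (ciSup_const).symm
    exact tendsto_const_nhds.congr' hev
  -- sqrt 3 < 2
  have hlt : Real.sqrt 3 < 2 := (Real.sqrt_lt' (by norm_num)).mpr (by norm_num)
  refine ⟨shift_ext hWhat' h2U, ?_, hspecW, hspecWhat, htend, ne_of_gt hlt⟩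
  rw [hsr, ENNReal.toReal_ofReal (Real.sqrt_nonneg 3)]

end Main
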